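/- The partial derivative with respect to d of the φ-coefficient (ωN − εd)/√(ε(N−ε)d(N−d)) is negative whenever 0<ε<N, 0<d<N, 0<ω≤min(ε,d); specifically, the sign of the derivative equals the sign of −N[d(ε−2ω)+ωN], which is negative since if ε<2ω then 2ω−ε≤ω and d<N imply d(2ω−ε)<Nω. -/

import Mathlib

theorem stmt_7 (N ε d ω : ℝ) (hN : 0 < N) (hε : 0 < ε) (hεN : ε < N)
    (hd : 0 < d) (hdN : d < N) (hω : 0 < ω) (hωm : ω ≤ min ε d) :
    HasDerivAt (fun t : ℝ => (ω * N - ε * t) / Real.sqrt (ε * (N - ε) * t * (N - t)))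
      ((ε * (N - ε)) ^ (-(1 : ℝ) / 2) *
        (-N * (d * (ε - 2 * ω) + ω * N)) / (2 * (d * (N - d)) ^ ((3 : ℝ) / 2))) d ∧
    (ε * (N - ε)) ^ (-(1 : ℝ) / 2) *
        (-N * (d * (ε - 2 * ω) + ω * N)) / (2 * (d * (N - d)) ^ ((3 : ℝ) / 2)) < 0 ∧
    -N * (d * (ε - 2 * ω) + ω * N) < 0 := by
  obtain ⟨hωε, hωd⟩ : ω ≤ ε ∧ ω ≤ d := ⟨le_trans hωm (min_le_left _ _), le_trans hωm (min_le_right _ _)⟩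
  have hA : 0 < ε * (N - ε) := mul_pos hε (by linarith)
  have hu : 0 < d * (N - d) := mul_pos hd (by linarith)
  have hP : 0 < ε * (N - ε) * d * (N - d) := by nlinarith
  -- key sign fact
  have hC : -N * (d * (ε - 2 * ω) + ω * N) < 0 := by
    nlinarith [mul_nonneg (sub_nonneg.2 hωε) hd.le, mul_pos hω (sub_pos.2 hdN)]
  -- sqrt abbreviations
  set a := Real.sqrt (ε * (N - ε)) with ha_def
  set s := Real.sqrt (d * (N - d)) with hs_def
  have ha : 0 < a := Real.sqrt_pos.mpr hA
  have hs : 0 < s := Real.sqrt_pos.mpr hu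
  have ha2 : a ^ 2 = ε * (N - ε) := Real.sq_sqrt hA.le
  have hs2 : s ^ 2 = d * (N - d) := Real.sq_sqrt hu.le
  have hPsqrt : Real.sqrt (ε * (N - ε) * d * (N - d)) = a * s := by
    rw [ha_def, hs_def, ← Real.sqrt_mul hA.le, mul_assoc]
  -- rpow rewrites
  have hr1 : (ε * (N - ε)) ^ (-(1 : ℝ) / 2) = 1 / a := by
    rw [ha_def, show (-(1:ℝ)/2) = -(1/2) by norm_num, Real.rpow_neg hA.le,
      ← Real.sqrt_eq_rpow, one_div]
  have hr2 : (d * (N - d)) ^ ((3 : ℝ) / 2) = (d * (N - d)) * s := by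
    rw [hs_def, show ((3:ℝ)/2) = 1 + 1/2 by norm_num, Real.rpow_add hu,
      Real.rpow_one, ← Real.sqrt_eq_rpow]
  -- derivative of inner polynomial
  have hp : HasDerivAt (fun t : ℝ => ε * (N - ε) * t * (N - t))
      (ε * (N - ε) * (N - 2 * d)) d := by
    have h1 : HasDerivAt (fun t : ℝ => ε * (N - ε) * t) (ε * (N - ε) * 1) d :=
      (hasDerivAt_id d).const_mul _
    have h2 : HasDerivAt (fun t : ℝ => N - t) (-1) d := by
      simpa using (hasDerivAt_id d).const_sub N
    have := h1.mul h2
    refine HasDerivAt.congr_deriv this ?_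
    ring
  have hPd : (fun t : ℝ => ε * (N - ε) * t * (N - t)) d ≠ 0 := by
    simp only; positivity
  have hg : HasDerivAt (fun t : ℝ => Real.sqrt (ε * (N - ε) * t * (N - t)))
      (ε * (N - ε) * (N - 2 * d) / (2 * (a * s))) d := by
    have := (Real.hasDerivAt_sqrt hPd).comp d hp
    refine HasDerivAt.congr_deriv this ?_
    simp only [Function.comp]
    rw [hPsqrt]
    ring
  have hn : HasDerivAt (fun t : ℝ => ω * N - ε * t) (-ε) d := by
    simpa using ((hasDerivAt_id d).const_mul ε).const_sub (ω * N)
  have hgd : Real.sqrt (ε * (N - ε) * d * (N - d)) ≠ 0 := by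
    rw [hPsqrt]; positivity
  have hdiv := hn.div hg hgd
  have hval : (-ε * Real.sqrt (ε * (N - ε) * d * (N - d)) -
      (ω * N - ε * d) * (ε * (N - ε) * (N - 2 * d) / (2 * (a * s)))) /
      Real.sqrt (ε * (N - ε) * d * (N - d)) ^ 2 =
      (ε * (N - ε)) ^ (-(1 : ℝ) / 2) *
        (-N * (d * (ε - 2 * ω) + ω * N)) / (2 * (d * (N - d)) ^ ((3 : ℝ) / 2)) := by
    rw [hPsqrt, hr1, hr2]
    field_simp
    have hNd : N - d ≠ 0 := by linarith
    rw [ha2, hs2]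
    field_simp
    ring
  refine ⟨?_, ?_, hC⟩
  · rw [← hval]; exact hdiv
  · rw [hr1, hr2]
    apply div_neg_of_neg_of_pos
    · exact mul_neg_of_pos_of_neg (by positivity) hC
    · positivity
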